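/- The signal covariance matrix depends only on the components of the beamformer in the channel subspace: for any N-stream beamformer w = (w_1, …, w_N) with each w_n ∈ L²(μ; ℂ), one has Q(w∥) = Q(w), where w∥ = (P_K w_1, …, P_K w_N) is the streamwise orthogonal projection of w onto K. -/

import Mathlib

open MeasureTheory ComplexConjugate

noncomputable section

variable {α β : Type*} [MeasurableSpace α] [MeasurableSpace β]

/-- Effective received signal `e_w(r) = ∫_{S_B} h(r,s) w(s) dμ(s)`. -/
def eSig (h : β → α → ℂ) (μ : Measure α) (w : Lp ℂ 2 μ) (r : β) : ℂ :=
  ∫ s, h r s * (w : α → ℂ) s ∂μ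

/-- The closed linear span `K` of the conjugated channel sections
`{s ↦ conj (h r s) : r ∈ S_U, h(r,·) ∈ L²(μ)}` in `L²(μ; ℂ)`. -/
def chanSub (h : β → α → ℂ) (μ : Measure α) : Submodule ℂ (Lp ℂ 2 μ) :=
  (Submodule.span ℂ {f : Lp ℂ 2 μ |
    ∃ r : β, ∃ hr : MemLp (fun s => conj (h r s)) 2 μ,
      f = hr.toLp (fun s => conj (h r s))}).topologicalClosure

instance (h : β → α → ℂ) (μ : Measure α) : CompleteSpace (chanSub h μ) :=
  (Submodule.isClosed_topologicalClosure _).completeSpace_coe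

/-- The orthogonal projection `P_K` of `L²(μ; ℂ)` onto the channel subspace `K`. -/
def projK (h : β → α → ℂ) (μ : Measure α) (w : Lp ℂ 2 μ) : Lp ℂ 2 μ :=
  (Submodule.orthogonalProjectionOnto (chanSub h μ) w : Lp ℂ 2 μ)

/-- Signal covariance matrix `Q(w)_{mn} = ∫ conj(e_{w_m}(r)) ⬝ e_{w_n}(r) dν(r)`. -/
def covQ (h : β → α → ℂ) (μ : Measure α) (ν : Measure β) {N : ℕ}
    (w : Fin N → Lp ℂ 2 μ) : Matrix (Fin N) (Fin N) ℂ :=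
  Matrix.of fun m n => ∫ r, conj (eSig h μ (w m) r) * eSig h μ (w n) r ∂ν

private lemma eSig_eq_inner (h : β → α → ℂ) (μ : Measure α) (w : Lp ℂ 2 μ)
    {r : β} (hr : MemLp (fun s => conj (h r s)) 2 μ) :
    eSig h μ w r = @inner ℂ _ _ (hr.toLp (fun s => conj (h r s))) w := by
  rw [MeasureTheory.L2.inner_def]
  refine integral_congr_ae ?_
  filter_upwards [hr.coeFn_toLp] with s hs
  rw [RCLike.inner_apply, hs, RingHomCompTriple.comp_apply, RingHom.id_apply, mul_comm]

private lemma eSig_projK_eq (h : β → α → ℂ) (μ : Measure α) (w : Lp ℂ 2 μ)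
    {r : β} (hr : MemLp (fun s => conj (h r s)) 2 μ) :
    eSig h μ (projK h μ w) r = eSig h μ w r := by
  set g : Lp ℂ 2 μ := hr.toLp (fun s => conj (h r s)) with hg
  have hgK : g ∈ chanSub h μ :=
    Submodule.le_topologicalClosure _ (Submodule.subset_span ⟨r, hr, rfl⟩)
  rw [eSig_eq_inner h μ _ hr, eSig_eq_inner h μ _ hr]
  have horth := (Submodule.mem_orthogonal (chanSub h μ)
    (w - projK h μ w)).mp (Submodule.sub_starProjection_mem_orthogonal (K := chanSub h μ) w) g hgK
  have := inner_sub_right (𝕜 := ℂ) g w (projK h μ w)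
  rw [horth] at this
  exact (sub_eq_zero.mp this.symm).symm

private lemma ae_section_memℒp
    (μ : Measure α) (ν : Measure β) [SigmaFinite μ] [SigmaFinite ν]
    (h : β → α → ℂ) (hmeas : Measurable (Function.uncurry h))
    (hL2 : MemLp (Function.uncurry h) 2 (ν.prod μ)) :
    ∀ᵐ r ∂ν, MemLp (fun s => conj (h r s)) 2 μ := by
  have hint : Integrable (fun p : β × α => ‖Function.uncurry h p‖ ^ 2) (ν.prod μ) :=
    (memLp_two_iff_integrable_sq_norm hL2.1).mp hL2
  filter_upwards [hint.prod_right_ae] with r hrint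
  have hsm : AEStronglyMeasurable (h r) μ :=
    (hmeas.comp measurable_prodMk_left).aestronglyMeasurable
  have hmem : MemLp (h r) 2 μ := (memLp_two_iff_integrable_sq_norm hsm).mpr hrint
  exact ⟨Complex.continuous_conj.comp_aestronglyMeasurable hmem.1,
    lt_of_eq_of_lt (eLpNorm_conj (h r) 2 μ) hmem.2⟩

/-- The signal covariance matrix depends only on the components of the
beamformer in the channel subspace: for any `N`-stream beamformer `w = (w_1, …, w_N)` with
each `w_n ∈ L²(μ; ℂ)`, one has `Q(w∥) = Q(w)`, where `w∥ = (P_K w_1, …, P_K w_N)` is the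
streamwise orthogonal projection of `w` onto `K`. -/
theorem covQ_projK_eq
    (μ : Measure α) (ν : Measure β) [SigmaFinite μ] [SigmaFinite ν]
    (h : β → α → ℂ)
    (hmeas : Measurable (Function.uncurry h))
    (hL2 : MemLp (Function.uncurry h) 2 (ν.prod μ))
    {N : ℕ} (w : Fin N → Lp ℂ 2 μ) :
    covQ h μ ν (fun n => projK h μ (w n)) = covQ h μ ν w := by
  simp only [covQ]
  congr 1
  funext m n
  refine integral_congr_ae ?_
  filter_upwards [ae_section_memℒp μ ν h hmeas hL2] with r hr
  rw [eSig_projK_eq h μ _ hr, eSig_projK_eq h μ _ hr]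

end
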